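/- There exists a continuous 1-periodic function ψ : ℝ → ℝ such that for all N ≥ 1, (1/N)·S(N) = (log₂ N)/4 + d(N)/(2N) + ψ(log₂ N), where S(N) = d(1) + ⋯ + d(N); moreover ψ is uniquely determined by this property. -/

import Mathlib

open Finset

/-- distance to nearest integer -/
noncomputable def vdcNd (t : ℝ) : ℝ := 1/2 - |Int.fract t - 1/2|

/-- periodic antiderivative of `vdcNd - 1/4` -/
noncomputable def vdcPhi (t : ℝ) : ℝ :=
  Int.fract t ^ 2 / 2 - Int.fract t / 4 - max (Int.fract t - 1/2) 0 ^ 2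

lemma vdcNd_continuous : Continuous vdcNd := by
  have : Continuous fun u : ℝ => (1:ℝ)/2 - |u - 1/2| := by continuity
  have h := ContinuousOn.comp_fract'' (f := fun u : ℝ => (1:ℝ)/2 - |u - 1/2|)
    (this.continuousOn) (by norm_num)
  exact h

lemma vdcPhi_continuous : Continuous vdcPhi := by
  have : Continuous fun u : ℝ => u ^ 2 / 2 - u / 4 - max (u - 1/2) 0 ^ 2 := by
    apply Continuous.sub
    · continuity
    · exact ((continuous_id.sub continuous_const).max continuous_const).pow 2
  have h := ContinuousOn.comp_fract''
    (f := fun u : ℝ => u ^ 2 / 2 - u / 4 - max (u - 1/2) 0 ^ 2)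
    (this.continuousOn) (by norm_num)
  exact h

lemma vdcNd_int_add (n : ℤ) (t : ℝ) : vdcNd (n + t) = vdcNd t := by
  simp [vdcNd, Int.fract_intCast_add]

lemma vdcPhi_int_add (n : ℤ) (t : ℝ) : vdcPhi (n + t) = vdcPhi t := by
  simp [vdcPhi, Int.fract_intCast_add]

lemma vdcNd_nat_add (n : ℕ) (t : ℝ) : vdcNd (n + t) = vdcNd t := by
  simpa using vdcNd_int_add n t

lemma vdcPhi_nat_add (n : ℕ) (t : ℝ) : vdcPhi (n + t) = vdcPhi t := by
  simpa using vdcPhi_int_add n t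

lemma vdcNd_intCast (n : ℤ) : vdcNd n = 0 := by
  simp [vdcNd, Int.fract_intCast]

lemma vdcNd_natCast (n : ℕ) : vdcNd n = 0 := by simpa using vdcNd_intCast n

lemma vdcPhi_intCast (n : ℤ) : vdcPhi n = 0 := by
  simp [vdcPhi, Int.fract_intCast]

lemma vdcPhi_natCast (n : ℕ) : vdcPhi n = 0 := by simpa using vdcPhi_intCast n

lemma vdcNd_low {u : ℝ} (h0 : 0 ≤ u) (h1 : u ≤ 1/2) : vdcNd u = u := by
  rw [vdcNd, Int.fract_eq_self.mpr ⟨h0, by linarith⟩, abs_of_nonpos (by linarith)]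
  ring

lemma vdcNd_high {u : ℝ} (h0 : 1/2 ≤ u) (h1 : u < 1) : vdcNd u = 1 - u := by
  rw [vdcNd, Int.fract_eq_self.mpr ⟨by linarith, h1⟩, abs_of_nonneg (by linarith)]
  ring

lemma vdcPhi_low {u : ℝ} (h0 : 0 ≤ u) (h1 : u ≤ 1/2) : vdcPhi u = u^2/2 - u/4 := by
  rw [vdcPhi, Int.fract_eq_self.mpr ⟨h0, by linarith⟩, max_eq_right (by linarith)]
  ring

lemma vdcPhi_high {u : ℝ} (h0 : 1/2 ≤ u) (h1 : u < 1) :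
    vdcPhi u = -u^2/2 + 3*u/4 - 1/4 := by
  rw [vdcPhi, Int.fract_eq_self.mpr ⟨by linarith, h1⟩, max_eq_left (by linarith)]
  ring

lemma vdcNd_abs_le (t : ℝ) : |vdcNd t| ≤ 1/2 := by
  rw [vdcNd, abs_le]
  constructor <;> [skip; simp [abs_nonneg]] <;>
  · have h1 := Int.fract_nonneg t
    have h2 := Int.fract_lt_one t
    cases abs_cases (Int.fract t - 1/2) with
    | inl h => rw [h.1]; linarith
    | inr h => rw [h.1]; linarith

lemma vdcPhi_abs_le (t : ℝ) : |vdcPhi t| ≤ 1 := by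
  have h1 := Int.fract_nonneg t
  have h2 := Int.fract_lt_one t
  rw [vdcPhi, abs_le]
  have hm : 0 ≤ max (Int.fract t - 1/2) 0 := le_max_right _ _
  have hm2 : max (Int.fract t - 1/2) 0 ≤ 1/2 := by
    apply max_le <;> linarith
  have hsq : max (Int.fract t - 1/2) 0 ^ 2 ≤ 1/4 := by nlinarith
  have hsq0 : 0 ≤ max (Int.fract t - 1/2) 0 ^ 2 := sq_nonneg _
  constructor <;> nlinarith [sq_nonneg (Int.fract t), sq_nonneg (Int.fract t - 1)]
lemma vdcNd_one : vdcNd 1 = 0 := by simpa using vdcNd_natCast 1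
lemma vdcPhi_one : vdcPhi 1 = 0 := by simpa using vdcPhi_natCast 1

lemma vdc_key_inc (j' : ℕ) (k : ℕ) :
    2^(j'+1) * (vdcPhi (((k:ℝ)+1)/2^(j'+1)) - vdcPhi ((k:ℝ)/2^(j'+1)))
      = (vdcNd ((k:ℝ)/2^(j'+1)) + vdcNd (((k:ℝ)+1)/2^(j'+1)))/2 - 1/4 := by
  set j := j' + 1 with hjdef
  have hP : (0:ℝ) < 2^j := by positivity
  have hPj' : (0:ℝ) < 2^j' := by positivity
  have hPP : (2:ℝ)^j = 2 * 2^j' := by rw [hjdef, pow_succ]; ring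
  set r := k % 2^j with hrdef
  have hrlt : r < 2^j := Nat.mod_lt _ (Nat.pow_pos (by norm_num))
  have hrltR : (r:ℝ) < 2^j := by exact_mod_cast hrlt
  have hk : (k:ℝ) = 2^j * (k / 2^j : ℕ) + r := by
    conv_lhs => rw [← Nat.div_add_mod k (2^j)]
    push_cast; ring
  set q := k / 2^j with hqdef
  have e1 : (k:ℝ)/2^j = (q:ℝ) + r/2^j := by rw [hk]; field_simp
  have e2 : ((k:ℝ)+1)/2^j = (q:ℝ) + ((r:ℝ)+1)/2^j := by rw [hk]; field_simp; ring
  rw [e1, e2, vdcPhi_nat_add, vdcPhi_nat_add, vdcNd_nat_add, vdcNd_nat_add]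
  have h0u : (0:ℝ) ≤ (r:ℝ)/2^j := by positivity
  rcases le_or_gt (r+1) (2^j') with hc | hc
  · have hc' : ((r:ℝ)+1) ≤ 2^j' := by exact_mod_cast hc
    have h1 : ((r:ℝ)+1)/2^j ≤ 1/2 := by rw [div_le_iff₀ hP, hPP]; linarith
    have h2 : (r:ℝ)/2^j ≤ 1/2 := by rw [div_le_iff₀ hP, hPP]; linarith
    rw [vdcPhi_low h0u h2, vdcPhi_low (by positivity) h1,
      vdcNd_low h0u h2, vdcNd_low (by positivity) h1]
    field_simp
    ring
  · have hc' : (2:ℝ)^j' ≤ (r:ℝ) := by exact_mod_cast Nat.lt_succ_iff.mp hc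
    have hu1 : (1:ℝ)/2 ≤ (r:ℝ)/2^j := by rw [le_div_iff₀ hP, hPP]; linarith
    have hu2 : (r:ℝ)/2^j < 1 := by rw [div_lt_one hP]; exact hrltR
    rcases lt_or_eq_of_le (Nat.succ_le_of_lt hrlt) with hc2 | hc2
    · have hc2' : ((r:ℝ)+1) < 2^j := by exact_mod_cast hc2
      have hv1 : (1:ℝ)/2 ≤ ((r:ℝ)+1)/2^j := by rw [le_div_iff₀ hP, hPP]; linarith
      have hv2 : ((r:ℝ)+1)/2^j < 1 := by rw [div_lt_one hP]; linarith
      rw [vdcPhi_high hu1 hu2, vdcPhi_high hv1 hv2,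
        vdcNd_high hu1 hu2, vdcNd_high hv1 hv2]
      field_simp
      ring
    · have hc2' : ((r:ℝ)+1) = 2^j := by exact_mod_cast hc2
      have hv : ((r:ℝ)+1)/2^j = 1 := by rw [hc2']; field_simp
      rw [hv, vdcPhi_one, vdcNd_one, vdcPhi_high hu1 hu2, vdcNd_high hu1 hu2]
      have hr' : (r:ℝ) = 2^j - 1 := by linarith
      rw [hr']
      field_simp
      ring

lemma vdc_nd_mid (j' : ℕ) (k : ℕ) :
    vdcNd ((2*(k:ℝ)+1)/2^(j'+2))
      = (vdcNd ((k:ℝ)/2^(j'+1)) + vdcNd (((k:ℝ)+1)/2^(j'+1)))/2 := by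
  set j := j' + 1 with hjdef
  have hP : (0:ℝ) < 2^j := by positivity
  have hP1 : (0:ℝ) < 2^(j+1) := by positivity
  have hPP : (2:ℝ)^j = 2 * 2^j' := by rw [hjdef, pow_succ]; ring
  have hPP1 : (2:ℝ)^(j+1) = 2 * 2^j := by rw [pow_succ]; ring
  set r := k % 2^j with hrdef
  have hrlt : r < 2^j := Nat.mod_lt _ (Nat.pow_pos (by norm_num))
  have hrltR : (r:ℝ) < 2^j := by exact_mod_cast hrlt
  have hk : (k:ℝ) = 2^j * (k / 2^j : ℕ) + r := by
    conv_lhs => rw [← Nat.div_add_mod k (2^j)]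
    push_cast; ring
  set q := k / 2^j with hqdef
  have e1 : (k:ℝ)/2^j = (q:ℝ) + r/2^j := by rw [hk]; field_simp
  have e2 : ((k:ℝ)+1)/2^j = (q:ℝ) + ((r:ℝ)+1)/2^j := by rw [hk]; field_simp; ring
  have e3 : (2*(k:ℝ)+1)/2^(j+1) = (q:ℝ) + (2*(r:ℝ)+1)/2^(j+1) := by
    rw [hk, hPP1]; field_simp; ring
  have hje : j' + 2 = j + 1 := by omega
  rw [hje, e1, e2, e3, vdcNd_nat_add, vdcNd_nat_add, vdcNd_nat_add]
  have h0u : (0:ℝ) ≤ (r:ℝ)/2^j := by positivity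
  have h0w : (0:ℝ) ≤ (2*(r:ℝ)+1)/2^(j+1) := by positivity
  rcases le_or_gt (r+1) (2^j') with hc | hc
  · have hc' : ((r:ℝ)+1) ≤ 2^j' := by exact_mod_cast hc
    have h1 : ((r:ℝ)+1)/2^j ≤ 1/2 := by rw [div_le_iff₀ hP, hPP]; linarith
    have h2 : (r:ℝ)/2^j ≤ 1/2 := by rw [div_le_iff₀ hP, hPP]; linarith
    have h3 : (2*(r:ℝ)+1)/2^(j+1) ≤ 1/2 := by
      rw [div_le_iff₀ hP1, hPP1, hPP]; linarith
    rw [vdcNd_low h0u h2, vdcNd_low (by positivity) h1, vdcNd_low h0w h3]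
    rw [hPP1]; field_simp; ring
  · have hc' : (2:ℝ)^j' ≤ (r:ℝ) := by exact_mod_cast Nat.lt_succ_iff.mp hc
    have hu1 : (1:ℝ)/2 ≤ (r:ℝ)/2^j := by rw [le_div_iff₀ hP, hPP]; linarith
    have hu2 : (r:ℝ)/2^j < 1 := by rw [div_lt_one hP]; exact hrltR
    have hw1 : (1:ℝ)/2 ≤ (2*(r:ℝ)+1)/2^(j+1) := by
      rw [le_div_iff₀ hP1, hPP1, hPP]; linarith
    have hr1R : (r:ℝ) + 1 ≤ 2^j := by exact_mod_cast hrlt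
    have hw2 : (2*(r:ℝ)+1)/2^(j+1) < 1 := by
      rw [div_lt_one hP1, hPP1]; linarith
    rcases lt_or_eq_of_le (Nat.succ_le_of_lt hrlt) with hc2 | hc2
    · have hc2' : ((r:ℝ)+1) < 2^j := by exact_mod_cast hc2
      have hv1 : (1:ℝ)/2 ≤ ((r:ℝ)+1)/2^j := by rw [le_div_iff₀ hP, hPP]; linarith
      have hv2 : ((r:ℝ)+1)/2^j < 1 := by rw [div_lt_one hP]; linarith
      rw [vdcNd_high hu1 hu2, vdcNd_high hv1 hv2, vdcNd_high hw1 hw2]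
      rw [hPP1]; field_simp; ring
    · have hc2' : ((r:ℝ)+1) = 2^j := by exact_mod_cast hc2
      have hv : ((r:ℝ)+1)/2^j = 1 := by rw [hc2']; field_simp
      rw [hv, vdcNd_one, vdcNd_high hu1 hu2, vdcNd_high hw1 hw2]
      have hr' : (r:ℝ) = 2^j - 1 := by linarith
      rw [hr', hPP1]
      field_simp
      ring
lemma vdcNd_zero : vdcNd 0 = 0 := by simpa using vdcNd_natCast 0
lemma vdcPhi_zero : vdcPhi 0 = 0 := by simpa using vdcPhi_natCast 0

lemma vdc_geom (j : ℕ) : ∑ i ∈ Finset.range j, ((1:ℝ)/2^(i+1)) = 1 - 1/2^j := by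
  induction j with
  | zero => simp
  | succ n ih => rw [Finset.sum_range_succ, ih, pow_succ]; field_simp; ring

lemma vdc_d_formula (d : ℕ → ℚ) (h0 : d 0 = 0) (h1 : d 1 = 1)
    (heven : ∀ N : ℕ, d (2 * N) = d N)
    (hodd : ∀ N : ℕ, d (2 * N + 1) = (d N + d (N + 1) + 1) / 2) :
    ∀ k : ℕ, ∀ j : ℕ, k ≤ 2^j →
      (d k : ℝ) = ∑ i ∈ Finset.range j, vdcNd ((k:ℝ)/2^(i+1)) + (k:ℝ)/2^j := by
  intro k
  induction k using Nat.strong_induction_on with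
  | _ k IH =>
  intro j hkj
  rcases Nat.even_or_odd k with ⟨m, hm⟩ | ⟨m, hm⟩
  · rcases Nat.eq_zero_or_pos m with rfl | hmpos
    · have hk0 : k = 0 := by omega
      subst hk0
      simp [h0, vdcNd_zero]
    · -- k = 2m, m ≥ 1
      have hk2 : k = 2 * m := by omega
      subst hk2
      have hj1 : 1 ≤ j := by
        by_contra hcon
        push_neg at hcon
        have hj0 : j = 0 := by omega
        subst hj0
        norm_num at hkj
        omega
      obtain ⟨j', rfl⟩ : ∃ j'', j = j'' + 1 := ⟨j - 1, by omega⟩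
      have hpow : (2:ℕ)^(j'+1) = 2 * 2^j' := by rw [pow_succ]; ring
      rw [hpow] at hkj
      have hmle : m ≤ 2^j' := by omega
      have hmlt : m < 2 * m := by omega
      rw [heven m]
      have hs : ∑ i ∈ Finset.range (j'+1), vdcNd (((2*m : ℕ):ℝ)/2^(i+1))
          = ∑ i ∈ Finset.range j', vdcNd (((2*m : ℕ):ℝ)/2^(i+1+1))
            + vdcNd (((2*m : ℕ):ℝ)/2^(0+1)) := Finset.sum_range_succ' _ _
      have h00 : vdcNd (((2*m : ℕ):ℝ)/2^(0+1)) = 0 := by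
        have he : ((2*m : ℕ):ℝ)/2^(0+1) = (m:ℝ) := by push_cast; ring
        rw [he, vdcNd_natCast]
      have hterm : ∀ i ∈ Finset.range j',
          vdcNd (((2*m : ℕ):ℝ)/2^(i+1+1)) = vdcNd ((m:ℝ)/2^(i+1)) := by
        intro i _
        congr 1
        rw [pow_succ]
        push_cast
        field_simp
      have hlast : ((2*m : ℕ):ℝ)/2^(j'+1) = (m:ℝ)/2^j' := by
        rw [pow_succ]; push_cast; field_simp
      rw [hs, Finset.sum_congr rfl hterm, h00, hlast]
      linarith [IH m hmlt j' hmle]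
  · rcases Nat.eq_zero_or_pos m with rfl | hmpos
    · -- k = 1
      have hk1 : k = 1 := by omega
      subst hk1
      have hterm : ∀ i ∈ Finset.range j, vdcNd (((1:ℕ):ℝ)/2^(i+1)) = 1/2^(i+1) := by
        intro i _
        push_cast
        apply vdcNd_low (by positivity)
        have h2 : (2:ℝ) ≤ 2^(i+1) := by
          calc (2:ℝ) = 2^1 := by norm_num
          _ ≤ 2^(i+1) := by apply pow_le_pow_right₀ (by norm_num); omega
        rw [div_le_div_iff₀ (by positivity) (by norm_num)]
        linarith
      rw [Finset.sum_congr rfl hterm, vdc_geom, h1]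
      push_cast
      ring
    · -- k = 2m+1, m ≥ 1
      have hk2 : k = 2 * m + 1 := by omega
      subst hk2
      have hj2 : 2 ≤ j := by
        have h3 : (3:ℕ) ≤ 2^j := by omega
        by_contra hcon
        push_neg at hcon
        have : (2:ℕ)^j ≤ 2^1 := Nat.pow_le_pow_right (by norm_num) (by omega)
        norm_num at this
        omega
      obtain ⟨j', rfl⟩ : ∃ j'', j = j'' + 1 := ⟨j - 1, by omega⟩
      have hpow : (2:ℕ)^(j'+1) = 2 * 2^j' := by rw [pow_succ]; ring
      rw [hpow] at hkj
      have hm1le : m + 1 ≤ 2^j' := by omega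
      have hmle : m ≤ 2^j' := by omega
      have hmlt : m < 2 * m + 1 := by omega
      have hm1lt : m + 1 < 2 * m + 1 := by omega
      rw [hodd m]
      have hs : ∑ i ∈ Finset.range (j'+1), vdcNd (((2*m+1 : ℕ):ℝ)/2^(i+1))
          = ∑ i ∈ Finset.range j', vdcNd (((2*m+1 : ℕ):ℝ)/2^(i+1+1))
            + vdcNd (((2*m+1 : ℕ):ℝ)/2^(0+1)) := Finset.sum_range_succ' _ _
      have h00 : vdcNd (((2*m+1 : ℕ):ℝ)/2^(0+1)) = 1/2 := by
        have he : ((2*m+1 : ℕ):ℝ)/2^(0+1) = (m:ℝ) + 1/2 := by push_cast; ring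
        rw [he, vdcNd_nat_add, vdcNd_low] <;> norm_num
      have hterm : ∀ i ∈ Finset.range j',
          vdcNd (((2*m+1 : ℕ):ℝ)/2^(i+1+1))
            = (vdcNd ((m:ℝ)/2^(i+1)) + vdcNd (((m:ℝ)+1)/2^(i+1)))/2 := by
        intro i _
        have harg : ((2*m+1 : ℕ):ℝ)/2^(i+1+1) = (2*(m:ℝ)+1)/2^(i+2) := by
          push_cast; ring_nf
        rw [harg, vdc_nd_mid i m]
      rw [hs, Finset.sum_congr rfl hterm, h00]
      rw [← Finset.sum_div, Finset.sum_add_distrib]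
      have hA := IH m hmlt j' hmle
      have hB := IH (m+1) hm1lt j' hm1le
      have hBc : ((m+1 : ℕ):ℝ) = (m:ℝ) + 1 := by push_cast; ring
      rw [hBc] at hB
      have ht : ((2*m+1 : ℕ):ℝ)/2^(j'+1)
          = ((m:ℝ)/2^j' + ((m:ℝ)+1)/2^j')/2 := by
        rw [pow_succ]; push_cast; field_simp; ring
      rw [ht]
      push_cast
      push_cast at hA hB
      linarith

lemma vdc_F_formula (j' : ℕ) (N : ℕ) :
    ∑ k ∈ Finset.Icc 1 N, vdcNd ((k:ℝ)/2^(j'+1))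
      = (N:ℝ)/4 + 2^(j'+1) * vdcPhi ((N:ℝ)/2^(j'+1)) + vdcNd ((N:ℝ)/2^(j'+1))/2 := by
  induction N with
  | zero => simp [vdcNd_zero, vdcPhi_zero]
  | succ n ih =>
    rw [Finset.sum_Icc_succ_top (by omega : 1 ≤ n + 1), ih]
    have hkey := vdc_key_inc j' n
    push_cast
    linarith
lemma vdc_gauss (N : ℕ) : ∑ k ∈ Finset.Icc 1 N, (k:ℝ) = N*(N+1)/2 := by
  induction N with
  | zero => simp
  | succ n ih => rw [Finset.sum_Icc_succ_top (by omega : 1 ≤ n+1), ih]; push_cast; ring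

lemma vdc_star (d : ℕ → ℚ) (h0 : d 0 = 0) (h1 : d 1 = 1)
    (heven : ∀ N : ℕ, d (2 * N) = d N)
    (hodd : ∀ N : ℕ, d (2 * N + 1) = (d N + d (N + 1) + 1) / 2)
    (N J : ℕ) (h : N ≤ 2^J) :
    (∑ k ∈ Finset.Icc 1 N, (d k : ℝ)) - (d N : ℝ)/2
      = ∑ j ∈ Finset.range J, ((N:ℝ)/4 + 2^(j+1) * vdcPhi ((N:ℝ)/2^(j+1)))
        + (N:ℝ)^2/2^(J+1) := by
  have hd : ∀ k ∈ Finset.Icc 1 N, (d k : ℝ)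
      = ∑ j ∈ Finset.range J, vdcNd ((k:ℝ)/2^(j+1)) + (k:ℝ)/2^J := by
    intro k hk
    have hkN : k ≤ N := (Finset.mem_Icc.mp hk).2
    exact vdc_d_formula d h0 h1 heven hodd k J (hkN.trans h)
  have hdN := vdc_d_formula d h0 h1 heven hodd N J h
  have hsum : ∑ k ∈ Finset.Icc 1 N, (d k : ℝ)
      = ∑ j ∈ Finset.range J, (∑ k ∈ Finset.Icc 1 N, vdcNd ((k:ℝ)/2^(j+1)))
        + ∑ k ∈ Finset.Icc 1 N, (k:ℝ)/2^J := by
    rw [Finset.sum_congr rfl hd, Finset.sum_add_distrib, Finset.sum_comm]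
  have hF : ∀ j ∈ Finset.range J, ∑ k ∈ Finset.Icc 1 N, vdcNd ((k:ℝ)/2^(j+1))
      = ((N:ℝ)/4 + 2^(j+1) * vdcPhi ((N:ℝ)/2^(j+1))) + vdcNd ((N:ℝ)/2^(j+1))/2 := by
    intro j _
    have := vdc_F_formula j N
    linarith
  have hk2 : ∑ k ∈ Finset.Icc 1 N, (k:ℝ)/2^J = ((N:ℝ)*(N+1)/2)/2^J := by
    rw [← Finset.sum_div, vdc_gauss]
  rw [hsum, Finset.sum_congr rfl hF, hk2, Finset.sum_add_distrib, ← Finset.sum_div]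
  have hq : ((N:ℝ)*(N+1)/2)/2^J - ((N:ℝ)/2^J)/2 = (N:ℝ)^2/2^(J+1) := by
    rw [pow_succ]; field_simp; ring
  linarith [hq, hdN]
noncomputable def vdcA (j : ℕ) (x : ℝ) : ℝ :=
  1/4 + (2:ℝ)^((j:ℝ)+1-x) * vdcPhi ((2:ℝ)^(x-((j:ℝ)+1)))

noncomputable def vdcB (j : ℕ) (x : ℝ) : ℝ :=
  (2:ℝ)^(-(j:ℝ)-x) * vdcPhi ((2:ℝ)^(x+(j:ℝ)))

noncomputable def vdcPsi (x : ℝ) : ℝ :=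
  (∑' j : ℕ, vdcA j x) + (∑' j : ℕ, vdcB j x) - x/4

lemma vdc_rpow_pos (e : ℝ) : (0:ℝ) < (2:ℝ)^e := Real.rpow_pos_of_pos (by norm_num) e

lemma vdcA_eq {j : ℕ} {x : ℝ} (h : x ≤ j) : vdcA j x = (2:ℝ)^(x-(j:ℝ)-2) := by
  have hu0 : (0:ℝ) < (2:ℝ)^(x-((j:ℝ)+1)) := vdc_rpow_pos _
  have hu : (2:ℝ)^(x-((j:ℝ)+1)) ≤ 1/2 := by
    calc (2:ℝ)^(x-((j:ℝ)+1)) ≤ (2:ℝ)^(-1:ℝ) :=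
          Real.rpow_le_rpow_of_exponent_le (by norm_num) (by linarith)
    _ = 1/2 := by rw [Real.rpow_neg_one]; norm_num
  rw [vdcA, vdcPhi_low hu0.le hu]
  have hinv : (2:ℝ)^((j:ℝ)+1-x) * (2:ℝ)^(x-((j:ℝ)+1)) = 1 := by
    rw [← Real.rpow_add (by norm_num)]
    norm_num
  have hhalf : (2:ℝ)^(x-((j:ℝ)+1)) = (2:ℝ)^(x-(j:ℝ)-2) * 2 := by
    rw [show x-((j:ℝ)+1) = (x-(j:ℝ)-2) + 1 by ring, Real.rpow_add_one (by norm_num)]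
  set w := (2:ℝ)^((j:ℝ)+1-x)
  set u := (2:ℝ)^(x-((j:ℝ)+1))
  set v := (2:ℝ)^(x-(j:ℝ)-2)
  linear_combination (u/2) * hinv - (1/4) * hinv + (1/2) * hhalf

lemma vdc_rpow_split (a b : ℝ) : (2:ℝ)^(a+b) = (2:ℝ)^a * (2:ℝ)^b :=
  Real.rpow_add (by norm_num) a b

lemma vdc_rpow_nat (n : ℕ) : (2:ℝ)^((n:ℝ)) = (2:ℝ)^(n:ℕ) := Real.rpow_natCast 2 n

lemma vdc_half_pow (j : ℕ) : (2:ℝ)^(-(j:ℝ)) = (1/2:ℝ)^j := by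
  rw [Real.rpow_neg (by norm_num), Real.rpow_natCast]
  simp [one_div, inv_pow]

lemma vdcA_shift_eq (x : ℝ) (K : ℕ) (h : x ≤ K) (j : ℕ) :
    vdcA (j + K) x = (2:ℝ)^(x-(K:ℝ)-2) * (1/2)^j := by
  have hx : x ≤ ((j + K : ℕ):ℝ) := by push_cast; linarith [Nat.cast_nonneg (α := ℝ) j]
  rw [vdcA_eq hx]
  rw [show x - ((j+K:ℕ):ℝ) - 2 = (x - (K:ℝ) - 2) + (-(j:ℝ)) by push_cast; ring,
    vdc_rpow_split]
  congr 1
  exact vdc_half_pow j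

lemma vdcA_summable (x : ℝ) : Summable (fun j => vdcA j x) := by
  set K := ⌈x⌉₊ with hK
  have hxK : x ≤ K := Nat.le_ceil x
  rw [← summable_nat_add_iff K]
  have : (fun j => vdcA (j + K) x) = fun j => (2:ℝ)^(x-(K:ℝ)-2) * (1/2)^j := by
    funext j; exact vdcA_shift_eq x K hxK j
  rw [this]
  exact (summable_geometric_of_lt_one (r := (1/2:ℝ)) (by norm_num) (by norm_num)).mul_left _

lemma vdcA_tsum_eq (x : ℝ) (K : ℕ) (h : x ≤ K) :
    ∑' j : ℕ, vdcA j x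
      = ∑ j ∈ Finset.range K, vdcA j x + (2:ℝ)^(x-(K:ℝ)-1) := by
  rw [← Summable.sum_add_tsum_nat_add K (vdcA_summable x)]
  congr 1
  have h1 : ∀ j : ℕ, vdcA (j + K) x = (2:ℝ)^(x-(K:ℝ)-2) * (1/2)^j :=
    vdcA_shift_eq x K h
  rw [tsum_congr h1, tsum_mul_left, tsum_geometric_two]
  rw [show x - (K:ℝ) - 1 = (x - (K:ℝ) - 2) + 1 by ring, Real.rpow_add_one (by norm_num)]

lemma vdcB_bound (x : ℝ) (a : ℝ) (hx : a ≤ x) (j : ℕ) :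
    ‖vdcB j x‖ ≤ (2:ℝ)^(-a) * (1/2)^j := by
  rw [vdcB, norm_mul]
  have h1 : ‖(2:ℝ)^(-(j:ℝ)-x)‖ ≤ (2:ℝ)^(-a) * (1/2)^j := by
    rw [Real.norm_eq_abs, abs_of_pos (vdc_rpow_pos _)]
    have : (2:ℝ)^(-(j:ℝ)-x) ≤ (2:ℝ)^(-a + (-(j:ℝ))) :=
      Real.rpow_le_rpow_of_exponent_le (by norm_num) (by linarith)
    calc (2:ℝ)^(-(j:ℝ)-x) ≤ (2:ℝ)^(-a + (-(j:ℝ))) := this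
    _ = (2:ℝ)^(-a) * (1/2)^j := by
        rw [vdc_rpow_split]
        congr 1
        exact vdc_half_pow j
  have h2 : ‖vdcPhi ((2:ℝ)^(x+(j:ℝ)))‖ ≤ 1 := by
    rw [Real.norm_eq_abs]; exact vdcPhi_abs_le _
  calc ‖(2:ℝ)^(-(j:ℝ)-x)‖ * ‖vdcPhi ((2:ℝ)^(x+(j:ℝ)))‖
      ≤ ((2:ℝ)^(-a) * (1/2)^j) * 1 := by
        apply mul_le_mul h1 h2 (norm_nonneg _)
        positivity
  _ = (2:ℝ)^(-a) * (1/2)^j := by ring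

lemma vdcB_summable (x : ℝ) : Summable (fun j => vdcB j x) := by
  apply Summable.of_norm_bounded
    ((summable_geometric_of_lt_one (r := (1/2:ℝ)) (by norm_num) (by norm_num)).mul_left ((2:ℝ)^(-x)))
  exact vdcB_bound x x le_rfl
lemma vdc_cont_rpow {f : ℝ → ℝ} (hf : Continuous f) :
    Continuous fun x => (2:ℝ)^(f x) :=
  Continuous.rpow continuous_const hf (fun _ => Or.inl (by norm_num))

lemma vdcA_continuous (j : ℕ) : Continuous (vdcA j) := by
  unfold vdcA
  exact continuous_const.add ((vdc_cont_rpow (by continuity)).mul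
    (vdcPhi_continuous.comp (vdc_cont_rpow (by continuity))))

lemma vdcB_continuous (j : ℕ) : Continuous (vdcB j) := by
  unfold vdcB
  exact (vdc_cont_rpow (by continuity)).mul
    (vdcPhi_continuous.comp (vdc_cont_rpow (by continuity)))

lemma vdcA_tsum_continuous : Continuous (fun x => ∑' j : ℕ, vdcA j x) := by
  rw [continuous_iff_continuousAt]
  intro x₀
  set K := ⌈x₀⌉₊ + 1 with hKdef
  have hx₀ : x₀ < (K:ℝ) := by
    have h1 : x₀ ≤ (⌈x₀⌉₊ : ℝ) := Nat.le_ceil x₀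
    have h2 : ((⌈x₀⌉₊ : ℕ):ℝ) < ((⌈x₀⌉₊ + 1 : ℕ):ℝ) := by push_cast; linarith
    calc x₀ ≤ _ := h1
    _ < _ := h2
  have hg : ContinuousAt (fun x => ∑ j ∈ Finset.range K, vdcA j x
      + (2:ℝ)^(x-(K:ℝ)-1)) x₀ := by
    apply Continuous.continuousAt
    exact (continuous_finset_sum _ (fun j _ => vdcA_continuous j)).add
      (vdc_cont_rpow (by continuity))
  apply hg.congr
  apply Filter.eventuallyEq_of_mem (Iio_mem_nhds hx₀)
  intro x hx
  exact (vdcA_tsum_eq x K (le_of_lt hx)).symm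

lemma vdcB_tsum_continuous : Continuous (fun x => ∑' j : ℕ, vdcB j x) := by
  rw [continuous_iff_continuousAt]
  intro x₀
  have hmem : Set.Ioi (x₀ - 1) ∈ nhds x₀ := Ioi_mem_nhds (by linarith)
  apply ContinuousOn.continuousAt ?_ hmem
  apply continuousOn_tsum (fun j => (vdcB_continuous j).continuousOn)
    ((summable_geometric_of_lt_one (r := (1/2:ℝ)) (by norm_num)
      (by norm_num)).mul_left ((2:ℝ)^(-(x₀-1))))
  intro j x hx
  exact vdcB_bound x (x₀ - 1) (le_of_lt hx) j

lemma vdcPsi_continuous : Continuous vdcPsi := by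
  unfold vdcPsi
  exact (vdcA_tsum_continuous.add vdcB_tsum_continuous).sub
    (continuous_id.div_const 4)

lemma vdcA_succ_shift (j : ℕ) (x : ℝ) : vdcA (j+1) (x+1) = vdcA j x := by
  unfold vdcA
  push_cast
  rw [show (j:ℝ)+1+1-(x+1) = (j:ℝ)+1-x by ring,
    show x+1-((j:ℝ)+1+1) = x-((j:ℝ)+1) by ring]

lemma vdcA_zero_shift (x : ℝ) : vdcA 0 (x+1) = 1/4 + vdcB 0 x := by
  unfold vdcA vdcB
  push_cast
  rw [show (0:ℝ)+1-(x+1) = -(0:ℝ)-x by ring,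
    show x+1-((0:ℝ)+1) = x+(0:ℝ) by ring]

lemma vdcB_succ_shift (j : ℕ) (x : ℝ) : vdcB (j+1) x = vdcB j (x+1) := by
  unfold vdcB
  push_cast
  rw [show -((j:ℝ)+1)-x = -(j:ℝ)-(x+1) by ring,
    show x+((j:ℝ)+1) = x+1+(j:ℝ) by ring]

lemma vdcPsi_periodic : Function.Periodic vdcPsi 1 := by
  intro x
  have hA : ∑' j : ℕ, vdcA j (x+1) = 1/4 + vdcB 0 x + ∑' j : ℕ, vdcA j x := by
    rw [Summable.tsum_eq_zero_add (vdcA_summable (x+1))]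
    rw [tsum_congr (fun j => vdcA_succ_shift j x), vdcA_zero_shift]
  have hB : ∑' j : ℕ, vdcB j x = vdcB 0 x + ∑' j : ℕ, vdcB j (x+1) := by
    rw [Summable.tsum_eq_zero_add (vdcB_summable x)]
    rw [tsum_congr (fun j => vdcB_succ_shift j x)]
  unfold vdcPsi
  linarith [hA, hB]
lemma vdcPsi_eval (d : ℕ → ℚ) (h0 : d 0 = 0) (h1 : d 1 = 1)
    (heven : ∀ N : ℕ, d (2 * N) = d N)
    (hodd : ∀ N : ℕ, d (2 * N + 1) = (d N + d (N + 1) + 1) / 2)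
    (N : ℕ) (hN : 1 ≤ N) :
    vdcPsi (Real.logb 2 N)
      = ((∑ k ∈ Finset.Icc 1 N, (d k : ℝ)) - (d N : ℝ)/2)/N - Real.logb 2 N/4 := by
  have hNpos : (0:ℝ) < N := by exact_mod_cast hN
  set x := Real.logb 2 (N:ℝ) with hxdef
  have hx : (2:ℝ)^x = (N:ℝ) := Real.rpow_logb (by norm_num) (by norm_num) hNpos
  have hBzero : ∀ j : ℕ, vdcB j x = 0 := by
    intro j
    have harg : (2:ℝ)^(x+(j:ℝ)) = ((N * 2^j : ℕ):ℝ) := by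
      rw [vdc_rpow_split, hx, Real.rpow_natCast]
      push_cast
      ring
    rw [vdcB, harg, vdcPhi_natCast, mul_zero]
  have hB : ∑' j : ℕ, vdcB j x = 0 := by
    rw [tsum_congr hBzero, tsum_zero]
  have hxN : x ≤ (N:ℝ) := by
    rw [hxdef]
    rw [Real.logb_le_iff_le_rpow (by norm_num) hNpos]
    rw [Real.rpow_natCast]
    exact_mod_cast (Nat.lt_two_pow_self (n := N)).le
  have hstar := vdc_star d h0 h1 heven hodd N N (Nat.lt_two_pow_self (n := N)).le
  have hAform : ∀ j ∈ Finset.range N, vdcA j x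
      = ((N:ℝ)/4 + (2:ℝ)^(j+1:ℕ) * vdcPhi ((N:ℝ)/2^(j+1))) / N := by
    intro j _
    have e1 : (2:ℝ)^((j:ℝ)+1-x) = (2:ℝ)^(j+1:ℕ)/(N:ℝ) := by
      rw [show (j:ℝ)+1-x = ((j+1:ℕ):ℝ) + (-x) by push_cast; ring, vdc_rpow_split,
        Real.rpow_natCast, Real.rpow_neg (by norm_num), hx]
      ring
    have e2 : (2:ℝ)^(x-((j:ℝ)+1)) = (N:ℝ)/(2:ℝ)^(j+1:ℕ) := by
      rw [show x-((j:ℝ)+1) = x + (-((j+1:ℕ):ℝ)) by push_cast; ring, vdc_rpow_split,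
        Real.rpow_neg (by norm_num), Real.rpow_natCast, hx]
      ring
    rw [vdcA, e1, e2]
    field_simp
    try ring
  have htail : (2:ℝ)^(x-(N:ℝ)-1) = (N:ℝ)/(2:ℝ)^(N+1:ℕ) := by
    rw [show x-(N:ℝ)-1 = x + (-((N+1:ℕ):ℝ)) by push_cast; ring, vdc_rpow_split,
      Real.rpow_neg (by norm_num), Real.rpow_natCast, hx]
    ring
  have hA : ∑' j : ℕ, vdcA j x
      = ((∑ k ∈ Finset.Icc 1 N, (d k : ℝ)) - (d N : ℝ)/2)/N := by
    rw [vdcA_tsum_eq x N hxN, Finset.sum_congr rfl hAform, ← Finset.sum_div, htail]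
    rw [hstar]
    have hcancel : ((N:ℝ)^2/2^(N+1))/N = (N:ℝ)/(2:ℝ)^(N+1:ℕ) := by
      field_simp
    field_simp
    try ring
  unfold vdcPsi
  rw [hA, hB]
  ring
theorem vdc_partial_sums_eq (d : ℕ → ℚ)
    (h0 : d 0 = 0) (h1 : d 1 = 1)
    (heven : ∀ N : ℕ, d (2 * N) = d N)
    (hodd : ∀ N : ℕ, d (2 * N + 1) = (d N + d (N + 1) + 1) / 2)
    (N : ℕ) (hN : 1 ≤ N) :
    (∑ k ∈ Finset.Icc 1 N, (d k : ℝ)) / N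
      = Real.logb 2 N / 4 + (d N : ℝ) / (2 * N) + vdcPsi (Real.logb 2 N) := by
  have hNpos : (0:ℝ) < N := by exact_mod_cast hN
  rw [vdcPsi_eval d h0 h1 heven hodd N hN]
  have hq : ((∑ k ∈ Finset.Icc 1 N, (d k : ℝ)) - (d N : ℝ)/2)/N
      = (∑ k ∈ Finset.Icc 1 N, (d k : ℝ))/N - (d N : ℝ)/(2*N) := by
    field_simp
  rw [hq]
  ring

theorem vdc_partial_sums_periodic' (d : ℕ → ℚ)
    (h0 : d 0 = 0) (h1 : d 1 = 1)
    (heven : ∀ N : ℕ, d (2 * N) = d N)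
    (hodd : ∀ N : ℕ, d (2 * N + 1) = (d N + d (N + 1) + 1) / 2) :
    ∃! ψ : ℝ → ℝ, Continuous ψ ∧ Function.Periodic ψ 1 ∧
      ∀ N : ℕ, 1 ≤ N →
        (∑ k ∈ Finset.Icc 1 N, (d k : ℝ)) / N
          = Real.logb 2 N / 4 + (d N : ℝ) / (2 * N) + ψ (Real.logb 2 N) := by
  refine ⟨vdcPsi, ⟨vdcPsi_continuous, vdcPsi_periodic, ?_⟩, ?_⟩
  · intro N hN
    exact vdc_partial_sums_eq d h0 h1 heven hodd N hN
  · rintro ψ' ⟨hc, hp, hval⟩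
    funext y
    set a : ℕ → ℝ := fun n => (2:ℝ)^((n:ℝ)+y) with hadef
    have hapos : ∀ n, (0:ℝ) < a n := fun n => vdc_rpow_pos _
    set Nn : ℕ → ℕ := fun n => ⌈a n⌉₊ with hNdef
    have hNn1 : ∀ n, 1 ≤ Nn n := fun n => Nat.one_le_iff_ne_zero.mpr
      (by simp only [hNdef]; positivity)
    have hNnpos : ∀ n, (0:ℝ) < (Nn n : ℝ) := fun n => by exact_mod_cast hNn1 n
    set t : ℕ → ℝ := fun n => Real.logb 2 (Nn n) - n with htdef
    -- agreement at the sample points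
    have hagree : ∀ n, ψ' (t n) = vdcPsi (t n) := by
      intro n
      have e1 := hval (Nn n) (hNn1 n)
      have e2 := vdc_partial_sums_eq d h0 h1 heven hodd (Nn n) (hNn1 n)
      have e3 : ψ' (Real.logb 2 (Nn n)) = vdcPsi (Real.logb 2 (Nn n)) := by
        linarith
      have p1 : ψ' (t n) = ψ' (Real.logb 2 (Nn n)) := by
        have := hp.sub_nat_mul_eq (x := Real.logb 2 (Nn n)) (n := n)
        simpa [htdef] using this
      have p2 : vdcPsi (t n) = vdcPsi (Real.logb 2 (Nn n)) := by
        have := vdcPsi_periodic.sub_nat_mul_eq (x := Real.logb 2 (Nn n)) (n := n)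
        simpa [htdef] using this
      rw [p1, p2, e3]
    -- t n → y
    have hlow : ∀ n, y ≤ t n := by
      intro n
      have h1 : a n ≤ (Nn n : ℝ) := Nat.le_ceil _
      have h2 : Real.logb 2 (a n) ≤ Real.logb 2 (Nn n) :=
        Real.logb_le_logb_of_le (by norm_num) (hapos n) h1
      have h3 : Real.logb 2 (a n) = (n:ℝ) + y := Real.logb_rpow (by norm_num) (by norm_num)
      simp only [htdef]
      linarith
    have hup : ∀ n, t n ≤ y + Real.logb 2 (1 + (a n)⁻¹) := by
      intro n
      have h1 : (Nn n : ℝ) ≤ a n + 1 := by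
        have := Nat.ceil_lt_add_one (hapos n).le
        exact this.le
      have h2 : Real.logb 2 (Nn n) ≤ Real.logb 2 (a n + 1) :=
        Real.logb_le_logb_of_le (by norm_num) (hNnpos n) h1
      have h3 : Real.logb 2 (a n + 1) = Real.logb 2 (a n) + Real.logb 2 (1 + (a n)⁻¹) := by
        rw [← Real.logb_mul (hapos n).ne' (by positivity)]
        congr 1
        rw [mul_add, mul_one, mul_inv_cancel₀ (hapos n).ne']
      have h4 : Real.logb 2 (a n) = (n:ℝ) + y := Real.logb_rpow (by norm_num) (by norm_num)
      simp only [htdef]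
      linarith
    have hinv : Filter.Tendsto (fun n => (a n)⁻¹) Filter.atTop (nhds 0) := by
      have he : ∀ n, (a n)⁻¹ = (2:ℝ)^(-y) * (1/2:ℝ)^n := by
        intro n
        rw [hadef]
        rw [← Real.rpow_neg (by norm_num)]
        rw [show -((n:ℝ)+y) = (-y) + (-(n:ℝ)) by ring, vdc_rpow_split, vdc_half_pow]
      rw [funext he]
      have := (tendsto_pow_atTop_nhds_zero_of_lt_one
        (by norm_num : (0:ℝ) ≤ 1/2) (by norm_num)).const_mul ((2:ℝ)^(-y))
      simpa using this
    have hu : Filter.Tendsto (fun n => y + Real.logb 2 (1 + (a n)⁻¹))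
        Filter.atTop (nhds y) := by
      have h1 : Filter.Tendsto (fun n => 1 + (a n)⁻¹) Filter.atTop (nhds 1) := by
        have := hinv.const_add (1:ℝ)
        simpa using this
      have h2 : Filter.Tendsto (fun n => Real.logb 2 (1 + (a n)⁻¹))
          Filter.atTop (nhds 0) := by
        have hcont : ContinuousAt (Real.logb 2) 1 :=
          Real.continuousAt_logb (by norm_num)
        have := hcont.tendsto.comp h1
        simpa [Real.logb_one, Function.comp_def] using this
      have := h2.const_add y
      simpa using this
    have ht : Filter.Tendsto t Filter.atTop (nhds y) :=
      tendsto_of_tendsto_of_tendsto_of_le_of_le tendsto_const_nhds hu hlow hup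
    have l1 : Filter.Tendsto (fun n => ψ' (t n)) Filter.atTop (nhds (ψ' y)) :=
      (hc.continuousAt.tendsto).comp ht
    have l2 : Filter.Tendsto (fun n => vdcPsi (t n)) Filter.atTop (nhds (vdcPsi y)) :=
      (vdcPsi_continuous.continuousAt.tendsto).comp ht
    have : (fun n => ψ' (t n)) = fun n => vdcPsi (t n) := funext hagree
    rw [this] at l1
    exact tendsto_nhds_unique l1 l2

theorem vdc_partial_sums_periodic (d : ℕ → ℚ)
    (h0 : d 0 = 0) (h1 : d 1 = 1)
    (heven : ∀ N : ℕ, d (2 * N) = d N)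
    (hodd : ∀ N : ℕ, d (2 * N + 1) = (d N + d (N + 1) + 1) / 2) :
    ∃! ψ : ℝ → ℝ, Continuous ψ ∧ Function.Periodic ψ 1 ∧
      ∀ N : ℕ, 1 ≤ N →
        (∑ k ∈ Finset.Icc 1 N, (d k : ℝ)) / N
          = Real.logb 2 N / 4 + (d N : ℝ) / (2 * N) + ψ (Real.logb 2 N) := by
  exact vdc_partial_sums_periodic' d h0 h1 heven hodd
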